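/- Let ν be a Lévy measure, c ∈ ℝ, and suppose c(e^x - 1) < 1 for all x ∈ supp ν and ∫_{|x|>1} e^x ν(dx) < ∞. Define ν*(dx) = (1 - c(e^x-1)) ν(dx). If ν ∈ 𝒮₂(α) for some α ∈ (0,2), then ν* ∈ 𝒮₂(α); that is, 0 < liminf_{|u|→∞} |u|^{-α} ∫(1-cos(ux)) ν*(dx) ≤ limsup_{|u|→∞} |u|^{-α} ∫(1-cos(ux)) ν*(dx) < ∞. -/
import Mathlib


open MeasureTheory Filter

/-- A Lévy measure on `ℝ`: no mass at `0` and `∫ (x² ∧ 1) ν(dx) < ∞`. -/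
def IsLevyMeasure (ν : Measure ℝ) : Prop :=
  ν {0} = 0 ∧ ∫⁻ x, ENNReal.ofReal (min (x ^ 2) 1) ∂ν < ⊤

/-- `∫ (1 - cos(ux)) ν(dx)` as an `ℝ≥0∞`-valued integral. -/
noncomputable def cosInt (ν : Measure ℝ) (u : ℝ) : ENNReal :=
  ∫⁻ x, ENNReal.ofReal (1 - Real.cos (u * x)) ∂ν

/-- The filter `|u| → ∞`. -/
def absAtTop : Filter ℝ := Filter.comap (fun u : ℝ => |u|) Filter.atTop

/-- The class `𝒮₂(α)`: `0 < liminf_{|u|→∞} |u|^{-α} ∫(1-cos(ux))ν(dx) ≤ limsup < ∞`. -/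
noncomputable def MemS2 (α : ℝ) (ν : Measure ℝ) : Prop :=
  0 < Filter.liminf (fun u : ℝ => cosInt ν u / ENNReal.ofReal (|u| ^ α)) absAtTop ∧
  Filter.limsup (fun u : ℝ => cosInt ν u / ENNReal.ofReal (|u| ^ α)) absAtTop < ⊤

/-- The class `𝒮₁(α)`: `ν = ν₁ + ν₂` with `ν₁` having a density `k(x)/|x|^{α+1}` where `k`
is bounded away from `0` and `∞` near the origin and `k(x)/|x|^α` is monotone on each
half-line, while `ν₂` satisfies `limsup_{|u|→∞} |u|^{-α} ∫(1-cos(ux))ν₂(dx) < ∞`. -/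
noncomputable def MemS1 (α : ℝ) (ν : Measure ℝ) : Prop :=
  ∃ (ν₁ ν₂ : Measure ℝ) (k : ℝ → ℝ),
    IsLevyMeasure ν₁ ∧ IsLevyMeasure ν₂ ∧ ν = ν₁ + ν₂ ∧
    ν₁ = volume.withDensity
      (fun x => if x = 0 then 0 else ENNReal.ofReal (k x / |x| ^ (α + 1))) ∧
    (∃ c C : ℝ, 0 < c ∧ ∀ᶠ x in nhdsWithin 0 {(0 : ℝ)}ᶜ, c ≤ k x ∧ k x ≤ C) ∧
    (∀ x y : ℝ, x ≤ y → y < 0 → k x / |x| ^ α ≤ k y / |y| ^ α) ∧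
    (∀ x y : ℝ, 0 < x → x ≤ y → k y / |y| ^ α ≤ k x / |x| ^ α) ∧
    (∃ C : ℝ, ∀ᶠ u in absAtTop, cosInt ν₂ u ≤ ENNReal.ofReal (C * |u| ^ α))

/-- Support of a measure on `ℝ`. -/
def msupport (ν : Measure ℝ) : Set ℝ :=
  {x | ∀ ε > 0, 0 < ν (Set.Ioo (x - ε) (x + ε))}

lemma absAtTop_neBot : absAtTop.NeBot :=
  atTop_neBot.mono tendsto_abs_atTop_atTop.le_comap

lemma aux_div_small (K ε : ENNReal) (hK : K ≠ ⊤) (hε0 : ε ≠ 0) (hε : ε ≠ ⊤) {l : Filter ℝ}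
    {w : ℝ → ENNReal} (hw : Tendsto w l (nhds ⊤)) : ∀ᶠ u in l, K / w u ≤ ε := by
  filter_upwards [hw (Ioi_mem_nhds (ENNReal.mul_lt_top hK.lt_top
    (ENNReal.inv_lt_top.2 (pos_iff_ne_zero.2 hε0))))] with u hu
  rw [ENNReal.div_le_iff_le_mul (Or.inr hε) (Or.inr hε0)]
  calc K = ε * (K * ε⁻¹) := by
        rw [mul_comm K, ← mul_assoc, ENNReal.mul_inv_cancel hε0 hε, one_mul]
    _ ≤ ε * w u := mul_le_mul_right hu.le ε

/-- if `ν ∈ 𝒮₂(α)`, `c(e^x-1) < 1` on `supp ν` and `∫_{|x|>1} e^x ν(dx) < ∞`,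
then `ν*(dx) = (1-c(e^x-1))ν(dx)` belongs to `𝒮₂(α)`. -/
theorem stmt8 (ν : Measure ℝ) (hν : IsLevyMeasure ν) (c α : ℝ) (hα : α ∈ Set.Ioo (0 : ℝ) 2)
    (hc : ∀ x ∈ msupport ν, c * (Real.exp x - 1) < 1)
    (hbig : ∫⁻ x in {x : ℝ | 1 < |x|}, ENNReal.ofReal (Real.exp x) ∂ν < ⊤)
    (hS2 : MemS2 α ν) :
    MemS2 α (ν.withDensity fun x => ENNReal.ofReal (1 - c * (Real.exp x - 1))) := by
  have := absAtTop_neBot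
  set g : ℝ → ENNReal := fun x => ENNReal.ofReal (1 - c * (Real.exp x - 1)) with hgdef
  have hg : Measurable g :=
    (measurable_const.sub (measurable_const.mul
      (Real.measurable_exp.sub measurable_const))).ennreal_ofReal
  have hh : ∀ u : ℝ, Measurable fun x => ENNReal.ofReal (1 - Real.cos (u * x)) := fun u =>
    (measurable_const.sub ((Real.continuous_cos.comp
      (continuous_const.mul continuous_id)).measurable)).ennreal_ofReal
  -- choose δ
  have hcont : ContinuousAt (fun x : ℝ => c * (Real.exp x - 1)) 0 :=
    (continuous_const.mul (Real.continuous_exp.sub continuous_const)).continuousAt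
  have h0 : (fun x : ℝ => c * (Real.exp x - 1)) 0 = 0 := by simp
  have hev : ∀ᶠ x in nhds (0 : ℝ), |c * (Real.exp x - 1)| < 1 / 2 := by
    have ht : Tendsto (fun x : ℝ => c * (Real.exp x - 1)) (nhds 0) (nhds 0) := by
      simpa using hcont.tendsto
    have := ht (Metric.ball_mem_nhds (0 : ℝ) (by norm_num : (0:ℝ) < 1 / 2))
    filter_upwards [this] with x hx
    simpa [Real.dist_eq, abs_mul] using hx
  obtain ⟨δ₀, hδ₀, hδball⟩ := Metric.eventually_nhds_iff.1 hev
  set δ : ℝ := min δ₀ 1 with hδdef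
  have hδpos : 0 < δ := lt_min hδ₀ one_pos
  have hδ1 : δ ≤ 1 := min_le_right _ _
  have hδsmall : ∀ x : ℝ, |x| < δ → |c * (Real.exp x - 1)| < 1 / 2 := fun x hx =>
    hδball (by simpa [Real.dist_eq] using hx.trans_le (min_le_left _ _))
  set S : Set ℝ := {x | δ ≤ |x|} with hSdef
  have hS : MeasurableSet S := measurableSet_le measurable_const measurable_abs
  -- ν S < ⊤
  have hνS : ν S < ⊤ := by
    set m : ENNReal := ENNReal.ofReal (min (δ ^ 2) 1) with hmdef
    have hm0 : m ≠ 0 := by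
      refine (ENNReal.ofReal_pos.2 (lt_min (by positivity) one_pos)).ne'
    have hsub : S ⊆ {x | m ≤ ENNReal.ofReal (min (x ^ 2) 1)} := by
      intro x hx
      have hx' : δ ≤ |x| := hx
      have : δ ^ 2 ≤ x ^ 2 := by
        have := pow_le_pow_left₀ hδpos.le hx' 2
        simpa [sq_abs] using this
      exact ENNReal.ofReal_le_ofReal (min_le_min this le_rfl)
    have hFmeas : Measurable fun x : ℝ => ENNReal.ofReal (min (x ^ 2) 1) :=
      ((measurable_id.pow_const 2).min measurable_const).ennreal_ofReal
    have hkey := mul_meas_ge_le_lintegral₀ (μ := ν) hFmeas.aemeasurable m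
    have hlt : m * ν {x : ℝ | m ≤ ENNReal.ofReal (min (x ^ 2) 1)} < ⊤ := hkey.trans_lt hν.2
    have hfin : ν {x : ℝ | m ≤ ENNReal.ofReal (min (x ^ 2) 1)} < ⊤ := by
      by_contra hcon
      rw [not_lt, top_le_iff] at hcon
      rw [hcon, ENNReal.mul_top hm0] at hlt
      exact lt_irrefl _ hlt
    exact (measure_mono hsub).trans_lt hfin
  -- constants
  set K₁ : ENNReal := 2 * ν S with hK₁def
  have hK₁ : K₁ ≠ ⊤ := (ENNReal.mul_lt_top (by norm_num) hνS).ne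
  set K₂ : ENNReal := ∫⁻ x in S, 2 * g x ∂ν with hK₂def
  have hgbound : ∀ x : ℝ, 2 * g x ≤
      ENNReal.ofReal (2 + 2 * |c|) + ENNReal.ofReal (2 * |c|) * ENNReal.ofReal (Real.exp x) := by
    intro x
    have habs : |Real.exp x - 1| ≤ Real.exp x + 1 :=
      abs_le.2 ⟨by nlinarith [Real.exp_pos x], by nlinarith⟩
    have h2 : -(c * (Real.exp x - 1)) ≤ |c| * (Real.exp x + 1) := by
      calc -(c * (Real.exp x - 1)) ≤ |c * (Real.exp x - 1)| := neg_le_abs _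
        _ = |c| * |Real.exp x - 1| := abs_mul _ _
        _ ≤ |c| * (Real.exp x + 1) := mul_le_mul_of_nonneg_left habs (abs_nonneg c)
    have hr : 2 * (1 - c * (Real.exp x - 1)) ≤ (2 + 2 * |c|) + 2 * |c| * Real.exp x := by
      nlinarith
    calc 2 * g x = ENNReal.ofReal (2 * (1 - c * (Real.exp x - 1))) := by
          rw [ENNReal.ofReal_mul (by norm_num : (0:ℝ) ≤ 2), ENNReal.ofReal_ofNat]
      _ ≤ ENNReal.ofReal ((2 + 2 * |c|) + 2 * |c| * Real.exp x) := ENNReal.ofReal_le_ofReal hr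
      _ = ENNReal.ofReal (2 + 2 * |c|) + ENNReal.ofReal (2 * |c| * Real.exp x) :=
          ENNReal.ofReal_add (by positivity) (by positivity)
      _ = ENNReal.ofReal (2 + 2 * |c|) + ENNReal.ofReal (2 * |c|) * ENNReal.ofReal (Real.exp x) :=
          by rw [ENNReal.ofReal_mul (by positivity)]
  have hexpS : ∫⁻ x in S, ENNReal.ofReal (Real.exp x) ∂ν < ⊤ := by
    have hsub : S ⊆ (S ∩ {x : ℝ | |x| ≤ 1}) ∪ {x : ℝ | 1 < |x|} := by
      intro x hx
      by_cases h : |x| ≤ 1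
      · exact Or.inl ⟨hx, h⟩
      · exact Or.inr (not_le.1 h)
    have h1 : ∫⁻ x in S ∩ {x : ℝ | |x| ≤ 1}, ENNReal.ofReal (Real.exp x) ∂ν ≤
        ENNReal.ofReal (Real.exp 1) * ν S := by
      calc ∫⁻ x in S ∩ {x : ℝ | |x| ≤ 1}, ENNReal.ofReal (Real.exp x) ∂ν
          ≤ ∫⁻ _ in S ∩ {x : ℝ | |x| ≤ 1}, ENNReal.ofReal (Real.exp 1) ∂ν :=
            setLIntegral_mono measurable_const (fun x hx =>
              ENNReal.ofReal_le_ofReal (Real.exp_le_exp.2 ((le_abs_self x).trans hx.2)))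
        _ = ENNReal.ofReal (Real.exp 1) * ν (S ∩ {x : ℝ | |x| ≤ 1}) := setLIntegral_const _ _
        _ ≤ ENNReal.ofReal (Real.exp 1) * ν S :=
            mul_le_mul_right (measure_mono Set.inter_subset_left) _
    calc ∫⁻ x in S, ENNReal.ofReal (Real.exp x) ∂ν
        ≤ ∫⁻ x in (S ∩ {x : ℝ | |x| ≤ 1}) ∪ {x : ℝ | 1 < |x|}, ENNReal.ofReal (Real.exp x) ∂ν :=
          lintegral_mono_set hsub
      _ ≤ ∫⁻ x in S ∩ {x : ℝ | |x| ≤ 1}, ENNReal.ofReal (Real.exp x) ∂ν +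
          ∫⁻ x in {x : ℝ | 1 < |x|}, ENNReal.ofReal (Real.exp x) ∂ν := lintegral_union_le _ _ _
      _ < ⊤ := ENNReal.add_lt_top.2 ⟨h1.trans_lt (ENNReal.mul_lt_top ENNReal.ofReal_lt_top hνS),
          hbig⟩
  have hK₂ : K₂ ≠ ⊤ := by
    have hmeas : Measurable fun x : ℝ => ENNReal.ofReal (Real.exp x) :=
      Real.measurable_exp.ennreal_ofReal
    have : K₂ ≤ ∫⁻ x in S, (ENNReal.ofReal (2 + 2 * |c|) +
        ENNReal.ofReal (2 * |c|) * ENNReal.ofReal (Real.exp x)) ∂ν :=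
      setLIntegral_mono (measurable_const.add (measurable_const.mul hmeas))
        (fun x _ => hgbound x)
    rw [lintegral_add_left measurable_const, setLIntegral_const,
      lintegral_const_mul' _ _ ENNReal.ofReal_ne_top] at this
    refine (this.trans_lt (ENNReal.add_lt_top.2
      ⟨ENNReal.mul_lt_top ENNReal.ofReal_lt_top hνS,
       ENNReal.mul_lt_top ENNReal.ofReal_lt_top hexpS⟩)).ne
  -- pointwise bounds on g
  have hg_up : ∀ x ∈ Sᶜ, g x ≤ ENNReal.ofReal (3 / 2) := by
    intro x hx
    have hx' : |x| < δ := by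
      simpa [hSdef, Set.mem_compl_iff, Set.mem_setOf_eq, not_le] using hx
    have h := hδsmall x hx'
    refine ENNReal.ofReal_le_ofReal ?_
    have := neg_abs_le (c * (Real.exp x - 1))
    linarith [abs_lt.1 h]
  have hg_lo : ∀ x ∈ Sᶜ, ENNReal.ofReal (1 / 2) ≤ g x := by
    intro x hx
    have hx' : |x| < δ := by
      simpa [hSdef, Set.mem_compl_iff, Set.mem_setOf_eq, not_le] using hx
    have h := hδsmall x hx'
    refine ENNReal.ofReal_le_ofReal ?_
    linarith [abs_lt.1 h]
  have hEle2 : ∀ u x : ℝ, ENNReal.ofReal (1 - Real.cos (u * x)) ≤ 2 := by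
    intro u x
    calc ENNReal.ofReal (1 - Real.cos (u * x)) ≤ ENNReal.ofReal 2 :=
        ENNReal.ofReal_le_ofReal (by nlinarith [Real.neg_one_le_cos (u * x)])
      _ = 2 := by rw [ENNReal.ofReal_ofNat]
  have hstar : ∀ u : ℝ, cosInt (ν.withDensity g) u =
      ∫⁻ x, g x * ENNReal.ofReal (1 - Real.cos (u * x)) ∂ν := fun u => by
    simpa [cosInt] using lintegral_withDensity_eq_lintegral_mul ν hg (hh u)
  -- inequality (a)
  have hA : ∀ u : ℝ, cosInt (ν.withDensity g) u ≤ ENNReal.ofReal (3 / 2) * cosInt ν u + K₂ := by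
    intro u
    rw [hstar u, ← lintegral_add_compl (fun x => g x * ENNReal.ofReal (1 - Real.cos (u * x))) hS]
    have h1 : ∫⁻ x in Sᶜ, g x * ENNReal.ofReal (1 - Real.cos (u * x)) ∂ν ≤
        ENNReal.ofReal (3 / 2) * cosInt ν u := by
      calc ∫⁻ x in Sᶜ, g x * ENNReal.ofReal (1 - Real.cos (u * x)) ∂ν
          ≤ ∫⁻ x in Sᶜ, ENNReal.ofReal (3 / 2) * ENNReal.ofReal (1 - Real.cos (u * x)) ∂ν :=
            setLIntegral_mono (measurable_const.mul (hh u))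
              (fun x hx => mul_le_mul_left (hg_up x hx) _)
        _ = ENNReal.ofReal (3 / 2) * ∫⁻ x in Sᶜ, ENNReal.ofReal (1 - Real.cos (u * x)) ∂ν :=
            lintegral_const_mul' _ _ ENNReal.ofReal_ne_top
        _ ≤ ENNReal.ofReal (3 / 2) * cosInt ν u :=
            mul_le_mul_right (setLIntegral_le_lintegral _ _) _
    have h2 : ∫⁻ x in S, g x * ENNReal.ofReal (1 - Real.cos (u * x)) ∂ν ≤ K₂ := by
      refine setLIntegral_mono (measurable_const.mul hg) (fun x _ => ?_)
      calc g x * ENNReal.ofReal (1 - Real.cos (u * x)) ≤ g x * 2 :=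
          mul_le_mul_right (hEle2 u x) _
        _ = 2 * g x := mul_comm _ _
    calc (∫⁻ x in S, g x * ENNReal.ofReal (1 - Real.cos (u * x)) ∂ν) +
        ∫⁻ x in Sᶜ, g x * ENNReal.ofReal (1 - Real.cos (u * x)) ∂ν
        ≤ K₂ + ENNReal.ofReal (3 / 2) * cosInt ν u := add_le_add h2 h1
      _ = ENNReal.ofReal (3 / 2) * cosInt ν u + K₂ := add_comm _ _
  -- inequality (b)
  have hB : ∀ u : ℝ, cosInt ν u ≤ 2 * cosInt (ν.withDensity g) u + K₁ := by
    intro u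
    have hdec : cosInt ν u = (∫⁻ x in S, ENNReal.ofReal (1 - Real.cos (u * x)) ∂ν) +
        ∫⁻ x in Sᶜ, ENNReal.ofReal (1 - Real.cos (u * x)) ∂ν := by
      rw [lintegral_add_compl (fun x => ENNReal.ofReal (1 - Real.cos (u * x))) hS]
      rfl
    have h1 : ∫⁻ x in Sᶜ, ENNReal.ofReal (1 - Real.cos (u * x)) ∂ν ≤
        2 * cosInt (ν.withDensity g) u := by
      have hpoint : ∀ x ∈ Sᶜ, ENNReal.ofReal (1 - Real.cos (u * x)) ≤
          2 * (g x * ENNReal.ofReal (1 - Real.cos (u * x))) := by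
        intro x hx
        have hone : (2 : ENNReal) * ENNReal.ofReal (1 / 2) = 1 := by
          rw [show (2 : ENNReal) = ENNReal.ofReal 2 by rw [ENNReal.ofReal_ofNat],
            ← ENNReal.ofReal_mul (by norm_num)]
          norm_num
        calc ENNReal.ofReal (1 - Real.cos (u * x))
            = 2 * ENNReal.ofReal (1 / 2) * ENNReal.ofReal (1 - Real.cos (u * x)) := by
              rw [hone, one_mul]
          _ = 2 * (ENNReal.ofReal (1 / 2) * ENNReal.ofReal (1 - Real.cos (u * x))) :=
              mul_assoc _ _ _
          _ ≤ 2 * (g x * ENNReal.ofReal (1 - Real.cos (u * x))) :=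
              mul_le_mul_right (mul_le_mul_left (hg_lo x hx) _) _
      calc ∫⁻ x in Sᶜ, ENNReal.ofReal (1 - Real.cos (u * x)) ∂ν
          ≤ ∫⁻ x in Sᶜ, 2 * (g x * ENNReal.ofReal (1 - Real.cos (u * x))) ∂ν :=
            setLIntegral_mono (measurable_const.mul (hg.mul (hh u))) hpoint
        _ = 2 * ∫⁻ x in Sᶜ, g x * ENNReal.ofReal (1 - Real.cos (u * x)) ∂ν :=
            lintegral_const_mul' _ _ (by norm_num)
        _ ≤ 2 * ∫⁻ x, g x * ENNReal.ofReal (1 - Real.cos (u * x)) ∂ν :=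
            mul_le_mul_right (setLIntegral_le_lintegral _ _) _
        _ = 2 * cosInt (ν.withDensity g) u := by rw [hstar u]
    have h2 : ∫⁻ x in S, ENNReal.ofReal (1 - Real.cos (u * x)) ∂ν ≤ K₁ := by
      calc ∫⁻ x in S, ENNReal.ofReal (1 - Real.cos (u * x)) ∂ν
          ≤ ∫⁻ _ in S, (2 : ENNReal) ∂ν :=
            setLIntegral_mono measurable_const (fun x _ => hEle2 u x)
        _ = 2 * ν S := setLIntegral_const _ _
    calc cosInt ν u = _ := hdec
      _ ≤ K₁ + 2 * cosInt (ν.withDensity g) u := add_le_add h2 h1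
      _ = 2 * cosInt (ν.withDensity g) u + K₁ := add_comm _ _
  -- filter part
  have hwtop : Tendsto (fun u : ℝ => ENNReal.ofReal (|u| ^ α)) absAtTop (nhds ⊤) := by
    have h1 : Tendsto (fun u : ℝ => |u|) absAtTop atTop := tendsto_comap
    exact ENNReal.tendsto_ofReal_atTop.comp ((tendsto_rpow_atTop hα.1).comp h1)
  obtain ⟨hL, hM⟩ := hS2
  constructor
  · -- liminf
    set L := liminf (fun u : ℝ => cosInt ν u / ENNReal.ofReal (|u| ^ α)) absAtTop with hLdef
    set ε : ENNReal := min L 1 with hεdef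
    have hε0 : ε ≠ 0 := (lt_min hL one_pos).ne'
    have hεtop : ε ≠ ⊤ := ((min_le_right L 1).trans_lt (by norm_num)).ne
    have hhalf : ε / 2 < L := lt_of_lt_of_le (ENNReal.half_lt_self hε0 hεtop) (min_le_left _ _)
    have hev1 := eventually_lt_of_lt_liminf hhalf
    have hev2 : ∀ᶠ u in absAtTop, K₁ / ENNReal.ofReal (|u| ^ α) ≤ ε / 4 :=
      aux_div_small K₁ (ε / 4) hK₁ (ENNReal.div_pos hε0 (by norm_num)).ne'
        (ENNReal.div_lt_top hεtop (by norm_num)).ne hwtop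
    have key : ∀ᶠ u in absAtTop,
        ε / 8 ≤ cosInt (ν.withDensity g) u / ENNReal.ofReal (|u| ^ α) := by
      filter_upwards [hev1, hev2] with u h1 h2
      by_contra hcon
      push_neg at hcon
      have hchain : cosInt ν u / ENNReal.ofReal (|u| ^ α) ≤ ε / 2 := by
        calc cosInt ν u / ENNReal.ofReal (|u| ^ α)
            ≤ (2 * cosInt (ν.withDensity g) u + K₁) / ENNReal.ofReal (|u| ^ α) :=
              ENNReal.div_le_div_right (hB u) _
          _ = 2 * (cosInt (ν.withDensity g) u / ENNReal.ofReal (|u| ^ α)) +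
              K₁ / ENNReal.ofReal (|u| ^ α) := by rw [ENNReal.add_div, mul_div_assoc]
          _ ≤ 2 * (ε / 8) + ε / 4 := add_le_add (mul_le_mul_right hcon.le 2) h2
          _ = ε / 2 := by
            rw [← mul_div_assoc, show (8 : ENNReal) = 2 * 4 by norm_num,
              ENNReal.mul_div_mul_left _ _ (by norm_num) (by norm_num),
              ENNReal.div_add_div_same, ← two_mul, show (4 : ENNReal) = 2 * 2 by norm_num,
              ENNReal.mul_div_mul_left _ _ (by norm_num) (by norm_num)]
      exact absurd hchain (not_le.2 h1)
    exact lt_of_lt_of_le (ENNReal.div_pos hε0 (by norm_num)) (le_liminf_of_le (h := key))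
  · -- limsup
    set M := limsup (fun u : ℝ => cosInt ν u / ENNReal.ofReal (|u| ^ α)) absAtTop with hMdef
    have hev3 := eventually_lt_of_limsup_lt (ENNReal.lt_add_right hM.ne one_ne_zero)
    have hev4 : ∀ᶠ u in absAtTop, K₂ / ENNReal.ofReal (|u| ^ α) ≤ 1 :=
      aux_div_small K₂ 1 hK₂ one_ne_zero ENNReal.one_ne_top hwtop
    have hevbound : ∀ᶠ u in absAtTop, cosInt (ν.withDensity g) u / ENNReal.ofReal (|u| ^ α) ≤
        ENNReal.ofReal (3 / 2) * (M + 1) + 1 := by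
      filter_upwards [hev3, hev4] with u h3 h4
      calc cosInt (ν.withDensity g) u / ENNReal.ofReal (|u| ^ α)
          ≤ (ENNReal.ofReal (3 / 2) * cosInt ν u + K₂) / ENNReal.ofReal (|u| ^ α) :=
            ENNReal.div_le_div_right (hA u) _
        _ = ENNReal.ofReal (3 / 2) * (cosInt ν u / ENNReal.ofReal (|u| ^ α)) +
            K₂ / ENNReal.ofReal (|u| ^ α) := by rw [ENNReal.add_div, mul_div_assoc]
        _ ≤ ENNReal.ofReal (3 / 2) * (M + 1) + 1 :=
            add_le_add (mul_le_mul_right h3.le _) h4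
    refine (limsup_le_of_le (h := hevbound)).trans_lt ?_
    exact ENNReal.add_lt_top.2 ⟨ENNReal.mul_lt_top ENNReal.ofReal_lt_top
      (ENNReal.add_lt_top.2 ⟨hM, ENNReal.one_lt_top⟩), ENNReal.one_lt_top⟩
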